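/- Every torsion-free group has the matching property: if G is a group in which every nonidentity element has infinite order, then for every pair of finite subsets A and B of G with |A| = |B| and e ∉ B, there exists a matching from A to B. -/

import Mathlib

open scoped Pointwise


/-- A matching from a finite subset `A` to a finite subset `B` of a group `G` is a
bijection `f : A → B` such that `a * f a ∉ A` for all `a ∈ A`. -/
def IsMatching {G : Type*} [Group G] (A B : Finset G) (f : ↥A ≃ ↥B) : Prop :=
  ∀ a : ↥A, (a : G) * (f a : G) ∉ A

/-- Every torsion-free group has the matching property: if every nonidentity element of
`G` has infinite order, then for all finite subsets `A`, `B` of `G` with `|A| = |B|` and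
`1 ∉ B` there is a matching from `A` to `B`. -/
theorem stmt8 {G : Type*} [Group G] (htf : ∀ g : G, g ≠ 1 → ¬ IsOfFinOrder g)
    (A B : Finset G) (hcard : A.card = B.card) (hB : (1 : G) ∉ B) :
    ∃ f : ↥A ≃ ↥B, IsMatching A B f := by
  classical
  have htf' : Monoid.minOrder G = ⊤ :=
    top_le_iff.mp (Monoid.le_minOrder.2 fun a ha hfin => absurd hfin (htf a ha))
  -- neighbour sets
  set t : ↥A → Finset G := fun a => B.filter (fun b => (a : G) * b ∉ A) with ht
  -- Hall's condition
  have hall : ∀ s : Finset ↥A, s.card ≤ (s.biUnion t).card := by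
    intro s
    rcases s.eq_empty_or_nonempty with rfl | hs
    · simp
    by_contra hlt
    push_neg at hlt
    set N : Finset G := s.biUnion t with hN
    set S : Finset G := s.image Subtype.val with hS
    have hScard : S.card = s.card := Finset.card_image_of_injective _ Subtype.val_injective
    set T : Finset G := insert (1 : G) (B \ N) with hT
    have hNB : N ⊆ B := by
      intro b hb
      rcases Finset.mem_biUnion.mp hb with ⟨a, _, hab⟩
      exact (Finset.mem_filter.mp hab).1
    have h1 : (1 : G) ∉ B \ N := fun h => hB (Finset.mem_sdiff.mp h).1
    have hTcard : T.card = (B \ N).card + 1 := Finset.card_insert_of_notMem h1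
    have hBN : (B \ N).card = B.card - N.card := Finset.card_sdiff_of_subset hNB
    -- S * T ⊆ A
    have hsub : S * T ⊆ A := by
      intro x hx
      rcases Finset.mem_mul.mp hx with ⟨a, ha, b, hb, rfl⟩
      rcases Finset.mem_image.mp ha with ⟨a', ha', rfl⟩
      rcases Finset.mem_insert.mp hb with rfl | hb
      · simp only [mul_one]; exact a'.2
      · rcases Finset.mem_sdiff.mp hb with ⟨hbB, hbN⟩
        by_contra hab
        exact hbN (Finset.mem_biUnion.mpr ⟨a', ha', Finset.mem_filter.mpr ⟨hbB, hab⟩⟩)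
    have hCD : S.card + T.card - 1 ≤ (S * T).card := by
      have := cauchy_davenport_minOrder_mul
        (hS ▸ hs.image Subtype.val) (⟨1, Finset.mem_insert_self _ _⟩ : T.Nonempty)
      rw [htf', min_eq_right le_top] at this
      exact_mod_cast this
    have hle : (S * T).card ≤ A.card := Finset.card_le_card hsub
    have hNle : N.card ≤ B.card := Finset.card_le_card hNB
    have hNs : N.card + 1 ≤ s.card := hlt
    have hsA : s.card ≤ A.card := by
      simpa [hScard] using Finset.card_le_card (show S ⊆ A by
        intro x hx; rcases Finset.mem_image.mp hx with ⟨a, _, rfl⟩; exact a.2)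
    omega
  obtain ⟨f, hfinj, hft⟩ := (Finset.all_card_le_biUnion_card_iff_exists_injective t).mp hall
  have hfB : ∀ a, f a ∈ B := fun a => (Finset.mem_filter.mp (hft a)).1
  set g : ↥A → ↥B := fun a => ⟨f a, hfB a⟩ with hg
  have hginj : Function.Injective g := fun a b h => hfinj (congrArg Subtype.val h)
  have hbij : Function.Bijective g := by
    rw [Fintype.bijective_iff_injective_and_card]
    exact ⟨hginj, by simpa using hcard⟩
  refine ⟨Equiv.ofBijective g hbij, fun a => ?_⟩
  simpa using (Finset.mem_filter.mp (hft a)).2
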